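/- Let f : ℝᵈ → ℝ be C², μ-strongly-convex and L-smooth, with gradient-flow trajectory y(t) satisfying ‖∇f(y(t))‖ ≤ ℓ for all t ≥ 0. Let ε > 0 and choose 0 < h ≤ min{2με/(Lℓ), 1/L}. Then the sampled flow yₖ = y(kh) is ε-shadowed by any gradient descent orbit x_{k+1} = xₖ − h∇f(xₖ) started at any x₀ with ‖x₀ − y₀‖ ≤ ε: ‖xₖ − yₖ‖ ≤ ε for all k ∈ ℕ. -/

import Mathlib

open InnerProductSpace Set
open scoped RealInnerProductSpace

noncomputable def sharpL (d : ℕ) :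
    StrongDual ℝ (EuclideanSpace ℝ (Fin d)) →L[ℝ] EuclideanSpace ℝ (Fin d) :=
  { toLinearMap :=
    { toFun := fun l => (toDual ℝ (EuclideanSpace ℝ (Fin d))).symm l
      map_add' := fun l₁ l₂ => by simp
      map_smul' := fun r l => by
        simp only [LinearIsometryEquiv.map_smulₛₗ, starRingEnd_apply, star_trivial,
          RingHom.id_apply] }
    cont := (toDual ℝ (EuclideanSpace ℝ (Fin d))).symm.continuous }

variable {d : ℕ}

lemma sharpL_inner (l : StrongDual ℝ (EuclideanSpace ℝ (Fin d)))
    (w : EuclideanSpace ℝ (Fin d)) : ⟪sharpL d l, w⟫ = l w :=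
  toDual_symm_apply

lemma grad_eq (f : EuclideanSpace ℝ (Fin d) → ℝ) :
    gradient f = fun z => sharpL d (fderiv ℝ f z) := rfl

lemma grad_hasFDeriv {f : EuclideanSpace ℝ (Fin d) → ℝ} (hf : ContDiff ℝ 2 f)
    (a : EuclideanSpace ℝ (Fin d)) :
    HasFDerivAt (gradient f) ((sharpL d).comp (fderiv ℝ (fderiv ℝ f) a)) a := by
  have hf1 : ContDiff ℝ 1 (fderiv ℝ f) := hf.fderiv_right (by norm_num)
  have h2 : HasFDerivAt (fderiv ℝ f) (fderiv ℝ (fderiv ℝ f) a) a :=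
    ((hf1.differentiable (by norm_num)) a).hasFDerivAt
  rw [grad_eq]
  exact (sharpL d).hasFDerivAt.comp a h2

lemma grad_fderiv_eq {f : EuclideanSpace ℝ (Fin d) → ℝ} (hf : ContDiff ℝ 2 f)
    (a : EuclideanSpace ℝ (Fin d)) :
    fderiv ℝ (gradient f) a = (sharpL d).comp (fderiv ℝ (fderiv ℝ f) a) :=
  (grad_hasFDeriv hf a).fderiv

lemma hess_symm {f : EuclideanSpace ℝ (Fin d) → ℝ} (hf : ContDiff ℝ 2 f)
    (a u v : EuclideanSpace ℝ (Fin d)) :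
    ⟪fderiv ℝ (gradient f) a u, v⟫ = ⟪u, fderiv ℝ (gradient f) a v⟫ := by
  have hdf : ∀ z, HasFDerivAt f (fderiv ℝ f z) z := fun z =>
    ((hf.differentiable (by norm_num)) z).hasFDerivAt
  have hf1 : ContDiff ℝ 1 (fderiv ℝ f) := hf.fderiv_right (by norm_num)
  have h2 : HasFDerivAt (fderiv ℝ f) (fderiv ℝ (fderiv ℝ f) a) a :=
    ((hf1.differentiable (by norm_num)) a).hasFDerivAt
  have hsym := second_derivative_symmetric hdf h2
  rw [grad_fderiv_eq hf]
  simp only [ContinuousLinearMap.coe_comp', Function.comp_apply]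
  rw [sharpL_inner, real_inner_comm, sharpL_inner, hsym]

lemma contract_vec {f : EuclideanSpace ℝ (Fin d) → ℝ} {L μ h : ℝ} (hf : ContDiff ℝ 2 f)
    (hsc : ∀ a v, μ * ‖v‖ ^ 2 ≤ ⟪v, fderiv ℝ (gradient f) a v⟫)
    (hL : ∀ a, ‖fderiv ℝ (gradient f) a‖ ≤ L)
    (hμ : 0 < μ) (hμL : μ ≤ L) (hh : 0 < h) (hhL : h * L ≤ 1)
    (a v : EuclideanSpace ℝ (Fin d)) :
    ‖v - h • fderiv ℝ (gradient f) a v‖ ≤ (1 - h * μ) * ‖v‖ := by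
  set A := fderiv ℝ (gradient f) a with hA
  have symA : ∀ u w : EuclideanSpace ℝ (Fin d), ⟪A u, w⟫ = ⟪u, A w⟫ := hess_symm hf a
  set B : EuclideanSpace ℝ (Fin d) → EuclideanSpace ℝ (Fin d) := fun w => A w - μ • w with hB
  have symB : ∀ u w, ⟪u, B w⟫ = ⟪w, B u⟫ := by
    intro u w
    simp only [hB, inner_sub_right, real_inner_smul_right]
    rw [← symA w u, real_inner_comm (A w) u, real_inner_comm u w]
  have posB : ∀ w, 0 ≤ ⟪w, B w⟫ := by
    intro w
    have h1 := hsc a w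
    simp only [hB, inner_sub_right, real_inner_smul_right, real_inner_self_eq_norm_sq]
    linarith
  have ubB : ∀ w, ⟪w, B w⟫ ≤ (L - μ) * ‖w‖ ^ 2 := by
    intro w
    have h1 : ⟪w, A w⟫ ≤ ‖w‖ * ‖A w‖ := real_inner_le_norm w (A w)
    have h2 : ‖A w‖ ≤ ‖A‖ * ‖w‖ := A.le_opNorm w
    have h3 : ‖A‖ ≤ L := hL a
    have h4 : (0:ℝ) ≤ ‖w‖ := norm_nonneg w
    have h5 : (0:ℝ) ≤ ‖A w‖ := norm_nonneg _
    simp only [hB, inner_sub_right, real_inner_smul_right, real_inner_self_eq_norm_sq]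
    nlinarith
  have Blin : ∀ (u w : EuclideanSpace ℝ (Fin d)) (x : ℝ), B (u + x • w) = B u + x • B w := by
    intro u w x
    simp only [hB, map_add, map_smul, smul_sub, smul_smul, smul_add]
    module
  have csB : ∀ u w, ⟪u, B w⟫ ^ 2 ≤ ⟪u, B u⟫ * ⟪w, B w⟫ := by
    intro u w
    have key : ∀ x : ℝ, 0 ≤ ⟪w, B w⟫ * (x * x) + (2 * ⟪u, B w⟫) * x + ⟪u, B u⟫ := by
      intro x
      have hp := posB (u + x • w)
      have hexp : ⟪u + x • w, B (u + x • w)⟫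
          = ⟪u, B u⟫ + 2 * ⟪u, B w⟫ * x + ⟪w, B w⟫ * (x * x) := by
        rw [Blin]
        simp only [inner_add_left, inner_add_right, real_inner_smul_left, real_inner_smul_right]
        rw [symB w u]
        ring
      rw [hexp] at hp
      linarith
    have hd := discrim_le_zero key
    rw [discrim] at hd
    nlinarith
  have claim2 : ‖B v‖ ^ 2 ≤ (L - μ) * ⟪v, B v⟫ := by
    rcases eq_or_ne (B v) 0 with h0 | h0
    · rw [h0]
      simp
    · have hcs := csB (B v) v
      have h1 : ⟪B v, B (B v)⟫ ≤ (L - μ) * ‖B v‖ ^ 2 := ubB (B v)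
      have h2 : ⟪B v, B v⟫ = ‖B v‖ ^ 2 := real_inner_self_eq_norm_sq _
      have hpos : 0 < ‖B v‖ ^ 2 := by have := norm_pos_iff.mpr h0; positivity
      have h3 := posB v
      have h4 := posB (B v)
      have h5 : ‖B v‖ ^ 2 * ‖B v‖ ^ 2 ≤ ((L - μ) * ⟪v, B v⟫) * ‖B v‖ ^ 2 := by nlinarith
      exact le_of_mul_le_mul_right h5 hpos
  have e1 : ⟪v, A v⟫ = ⟪v, B v⟫ + μ * ‖v‖ ^ 2 := by
    simp only [hB, inner_sub_right, real_inner_smul_right, real_inner_self_eq_norm_sq]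
    ring
  have e2 : ‖A v‖ ^ 2 = ‖B v‖ ^ 2 + 2 * μ * ⟪v, B v⟫ + μ ^ 2 * ‖v‖ ^ 2 := by
    have hAv : A v = B v + μ • v := by simp [hB]
    rw [hAv, norm_add_sq_real, real_inner_smul_right, norm_smul, real_inner_comm]
    rw [mul_pow, Real.norm_eq_abs, sq_abs]
    ring
  have e0 : ‖v - h • A v‖ ^ 2 = ‖v‖ ^ 2 - 2 * h * ⟪v, A v⟫ + h ^ 2 * ‖A v‖ ^ 2 := by
    rw [norm_sub_sq_real, real_inner_smul_right, norm_smul, mul_pow, Real.norm_eq_abs, sq_abs]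
    ring
  have h1μ : 0 ≤ 1 - h * μ := by nlinarith
  have hsq : ‖v - h • A v‖ ^ 2 ≤ ((1 - h * μ) * ‖v‖) ^ 2 := by
    rw [e0, e1, e2]
    have k1 : h * (L - μ) ≤ 1 - h * μ := by nlinarith
    have k2 := posB v
    nlinarith [claim2, sq_nonneg ‖v‖, mul_nonneg (mul_nonneg hh.le hh.le) k2,
      mul_le_mul_of_nonneg_left claim2 (mul_nonneg hh.le hh.le)]
  nlinarith [norm_nonneg (v - h • A v), mul_nonneg h1μ (norm_nonneg v), hsq]

lemma grad_lip {f : EuclideanSpace ℝ (Fin d) → ℝ} {L : ℝ} (hf : ContDiff ℝ 2 f)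
    (hL : ∀ a, ‖fderiv ℝ (gradient f) a‖ ≤ L) (p q : EuclideanSpace ℝ (Fin d)) :
    ‖gradient f p - gradient f q‖ ≤ L * ‖p - q‖ := by
  apply Convex.norm_image_sub_le_of_norm_hasFDerivWithin_le
    (f' := fun z => fderiv ℝ (gradient f) z) (s := univ)
    (fun z _ => by
      have hz := grad_hasFDeriv hf z
      rw [← grad_fderiv_eq hf z] at hz
      exact hz.hasFDerivWithinAt)
    (fun z _ => hL z) convex_univ (mem_univ q) (mem_univ p)

lemma contract_map {f : EuclideanSpace ℝ (Fin d) → ℝ} {L μ h : ℝ} (hf : ContDiff ℝ 2 f)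
    (hsc : ∀ a v, μ * ‖v‖ ^ 2 ≤ ⟪v, fderiv ℝ (gradient f) a v⟫)
    (hL : ∀ a, ‖fderiv ℝ (gradient f) a‖ ≤ L)
    (hμ : 0 < μ) (hμL : μ ≤ L) (hh : 0 < h) (hhL : h * L ≤ 1)
    (p q : EuclideanSpace ℝ (Fin d)) :
    ‖(p - h • gradient f p) - (q - h • gradient f q)‖ ≤ (1 - h * μ) * ‖p - q‖ := by
  have h1μ : 0 ≤ 1 - h * μ := by nlinarith
  apply Convex.norm_image_sub_le_of_norm_hasFDerivWithin_le
    (f := fun w => w - h • gradient f w)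
    (f' := fun z => ContinuousLinearMap.id ℝ _ - h • fderiv ℝ (gradient f) z) (s := univ)
    (fun z _ => by
      have hz := grad_hasFDeriv hf z
      rw [← grad_fderiv_eq hf z] at hz
      exact ((hasFDerivAt_id z).sub (hz.const_smul h)).hasFDerivWithinAt)
    (fun z _ => ContinuousLinearMap.opNorm_le_bound _ h1μ (fun v => by
      simpa using contract_vec hf hsc hL hμ hμL hh hhL z v))
    convex_univ (mem_univ q) (mem_univ p)



/-- Shadowing under strong convexity: for 0 < h ≤ min{2με/(Lℓ), 1/L}, the sampled
gradient flow is ε-shadowed by any gradient descent orbit started ε-close to y₀. -/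
theorem gradient_descent_shadowing_strongly_convex {d : ℕ}
    (f : EuclideanSpace ℝ (Fin d) → ℝ) (L μ ℓ ε h : ℝ)
    (hf : ContDiff ℝ 2 f)
    (hsc : ∀ a v, μ * ‖v‖ ^ 2 ≤ inner ℝ v (fderiv ℝ (gradient f) a v))
    (hL : ∀ a, ‖fderiv ℝ (gradient f) a‖ ≤ L)
    (hμ : 0 < μ) (hLpos : 0 < L) (hℓpos : 0 < ℓ) (hε : 0 < ε)
    (y : ℝ → EuclideanSpace ℝ (Fin d))
    (hflow : ∀ t : ℝ, HasDerivAt y (-gradient f (y t)) t)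
    (hℓ : ∀ t : ℝ, 0 ≤ t → ‖gradient f (y t)‖ ≤ ℓ)
    (hh : 0 < h) (hhbound : h ≤ min (2 * μ * ε / (L * ℓ)) (1 / L))
    (x : ℕ → EuclideanSpace ℝ (Fin d))
    (hx0 : ‖x 0 - y 0‖ ≤ ε)
    (hgd : ∀ k : ℕ, x (k + 1) = x k - h • gradient f (x k)) :
    ∀ k : ℕ, ‖x k - y ((k : ℝ) * h)‖ ≤ ε := by
  rcases Nat.eq_zero_or_pos d with hd | hd
  · subst hd
    intro k
    rw [Subsingleton.elim (x k - y ((k : ℝ) * h)) 0]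
    simpa using hε.le
  -- basic numeric facts
  have hμL : μ ≤ L := by
    set v : EuclideanSpace ℝ (Fin d) := EuclideanSpace.single ⟨0, hd⟩ (1 : ℝ) with hv
    have hv1 : ‖v‖ = 1 := by simp [hv]
    have h1 := hsc 0 v
    have h2 : ⟪v, fderiv ℝ (gradient f) 0 v⟫ ≤ ‖v‖ * ‖fderiv ℝ (gradient f) 0 v‖ :=
      real_inner_le_norm _ _
    have h3 : ‖fderiv ℝ (gradient f) 0 v‖ ≤ ‖fderiv ℝ (gradient f) 0‖ * ‖v‖ :=
      (fderiv ℝ (gradient f) 0).le_opNorm v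
    have h4 := hL 0
    rw [hv1] at h1 h2 h3
    simp only [one_pow, mul_one, one_mul] at h1 h2 h3
    linarith
  have hh1 : h ≤ 1 / L := le_trans hhbound (min_le_right _ _)
  have hhL : h * L ≤ 1 := by
    rw [le_div_iff₀ hLpos] at hh1; linarith
  have hhε : h * (L * ℓ) ≤ 2 * μ * ε := by
    have h5 := le_trans hhbound (min_le_left _ _)
    rw [le_div_iff₀ (by positivity)] at h5; linarith
  have h1μ : 0 ≤ 1 - h * μ := by nlinarith
  -- speed of the flow
  have speed : ∀ a b : ℝ, 0 ≤ a → a ≤ b → ‖y b - y a‖ ≤ ℓ * (b - a) := by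
    intro a b ha hab
    have key := Convex.norm_image_sub_le_of_norm_hasDerivWithin_le
      (f := y) (f' := fun t => -gradient f (y t)) (s := Ici (0 : ℝ))
      (fun t ht => (hflow t).hasDerivWithinAt)
      (fun t ht => by simpa using hℓ t ht) (convex_Ici 0) ha (le_trans ha hab)
    rwa [Real.norm_eq_abs, abs_of_nonneg (by linarith)] at key
  -- one-step local truncation error
  have pseudo : ∀ t₀ : ℝ, 0 ≤ t₀ →
      ‖y (t₀ + h) - (y t₀ - h • gradient f (y t₀))‖ ≤ L * ℓ / 2 * h ^ 2 := by
    intro t₀ ht₀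
    set c : EuclideanSpace ℝ (Fin d) := gradient f (y t₀) with hc
    set g : ℝ → EuclideanSpace ℝ (Fin d) := fun s => y s - y t₀ + (s - t₀) • c with hg
    have hg' : ∀ s : ℝ, HasDerivAt g (-gradient f (y s) + c) s := by
      intro s
      have hA : HasDerivAt (fun s => y s - y t₀) (-gradient f (y s)) s :=
        (hflow s).sub_const _
      have hB : HasDerivAt (fun s : ℝ => (s - t₀) • c) c s := by
        simpa using ((hasDerivAt_id s).sub_const t₀).smul_const c
      exact hA.add hB
    have hBder : ∀ s : ℝ, HasDerivAt (fun s : ℝ => L * ℓ / 2 * (s - t₀) ^ 2)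
        (L * ℓ * (s - t₀)) s := by
      intro s
      have := (((hasDerivAt_id s).sub_const t₀).pow 2).const_mul (L * ℓ / 2)
      refine this.congr_deriv ?_
      simp
      ring
    have key := image_norm_le_of_norm_deriv_right_le_deriv_boundary
      (f := g) (f' := fun s => -gradient f (y s) + c) (a := t₀) (b := t₀ + h)
      (B := fun s => L * ℓ / 2 * (s - t₀) ^ 2) (B' := fun s => L * ℓ * (s - t₀))
      (fun s _ => (hg' s).continuousAt.continuousWithinAt)
      (fun s _ => (hg' s).hasDerivWithinAt)
      (by simp [hg]) hBder
      (fun s hs => by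
        show ‖-gradient f (y s) + c‖ ≤ L * ℓ * (s - t₀)
        have e : -gradient f (y s) + c = -(gradient f (y s) - c) := by module
        rw [e, norm_neg, hc]
        calc ‖gradient f (y s) - gradient f (y t₀)‖
            ≤ L * ‖y s - y t₀‖ := grad_lip hf hL _ _
          _ ≤ L * (ℓ * (s - t₀)) := by
              have := speed t₀ s ht₀ hs.1
              exact mul_le_mul_of_nonneg_left this hLpos.le
          _ = L * ℓ * (s - t₀) := by ring)
    have hmem : t₀ + h ∈ Icc t₀ (t₀ + h) := ⟨by linarith, le_rfl⟩
    have hfin := key hmem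
    have hgeq : y (t₀ + h) - (y t₀ - h • c) = g (t₀ + h) := by
      simp only [hg, add_sub_cancel_left]
      module
    rw [hgeq]
    simpa using hfin
  -- induction
  intro k
  induction k with
  | zero => simpa using hx0
  | succ k ih =>
    have ht₀ : (0 : ℝ) ≤ (k : ℝ) * h := by positivity
    have hps := pseudo ((k : ℝ) * h) ht₀
    have hcon := contract_map hf hsc hL hμ hμL hh hhL (x k) (y ((k : ℝ) * h))
    have hcast : ((k + 1 : ℕ) : ℝ) * h = (k : ℝ) * h + h := by push_cast; ring
    rw [hcast, hgd k]
    calc ‖(x k - h • gradient f (x k)) - y ((k : ℝ) * h + h)‖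
        ≤ ‖(x k - h • gradient f (x k)) - (y ((k : ℝ) * h) - h • gradient f (y ((k : ℝ) * h)))‖
          + ‖(y ((k : ℝ) * h) - h • gradient f (y ((k : ℝ) * h))) - y ((k : ℝ) * h + h)‖ := by
          rw [← sub_add_sub_cancel (x k - h • gradient f (x k))
            (y ((k : ℝ) * h) - h • gradient f (y ((k : ℝ) * h))) (y ((k : ℝ) * h + h))]
          exact norm_add_le _ _
      _ ≤ (1 - h * μ) * ‖x k - y ((k : ℝ) * h)‖ + L * ℓ / 2 * h ^ 2 := by
          refine add_le_add hcon ?_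
          rw [norm_sub_rev]
          exact hps
      _ ≤ (1 - h * μ) * ε + h * μ * ε := by
          have h6 := mul_le_mul_of_nonneg_left ih h1μ
          have h7 : L * ℓ / 2 * h ^ 2 ≤ h * μ * ε := by nlinarith
          linarith
      _ = ε := by ring
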